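/- Let d be an odd prime. If d = 3: a stochastic Lagrangian subspace T ≤ 𝔽₃⁶ satisfies T_LD ≠ {0} if and only if T ∈ {T̃₀, T̃₁}, where T̃₀ := span{((1,2,0);(1,2,0)), ((0,0,0);(1,1,1)), ((1,1,1);(0,0,0))} and T̃₁ := span{((1,2,0);(2,1,0)), ((0,0,0);(1,1,1)), ((1,1,1);(0,0,0))}; moreover T̃₀ ≠ T̃₁. If d ≡ 1 (mod 3), ξ ∈ 𝔽_d has multiplicative order 3, g₀ := (1,ξ,ξ²) and g₁ := (1,ξ²,ξ): a stochastic Lagrangian subspace T ≤ 𝔽_d⁶ satisfies T_LD ≠ {0} if and only if T = T̃_{ij} := span{(g_i; 0), (0; g_j), (1₃; 1₃)} for some i, j ∈ {0,1}; moreover the four subspaces T̃_{ij} are pairwise distinct. -/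
import Mathlib


open scoped Classical

noncomputable section

/-- `𝔽_d³` as triples over `ZMod d`. -/
abbrev F3 (d : ℕ) : Type := Fin 3 → ZMod d

/-- `𝔽_d⁶`, whose elements are written as pairs `(x; y)` with `x, y ∈ 𝔽_d³`. -/
abbrev V6 (d : ℕ) : Type := (Fin 3 → ZMod d) × (Fin 3 → ZMod d)

/-- The dot product `x·y = ∑ i, x i * y i` on `𝔽_d³`. -/
def dot3 {d : ℕ} (x y : F3 d) : ZMod d := ∑ i, x i * y i

/-- The all-ones vector `1₃`. -/
def one3 (d : ℕ) : F3 d := fun _ => 1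

/-- A stochastic Lagrangian subspace of `𝔽_d⁶`: an `𝔽_d`-subspace `T` with
`x·x = y·y` for all `(x; y) ∈ T`, `dim T = 3`, and `(1₃; 1₃) ∈ T`. -/
def IsSLS {d : ℕ} (T : Submodule (ZMod d) (V6 d)) : Prop :=
  (∀ p ∈ T, dot3 p.1 p.1 = dot3 p.2 p.2) ∧
    Module.finrank (ZMod d) T = 3 ∧ (one3 d, one3 d) ∈ T

/-- The two stochastic Lagrangian subspaces `T̃₀, T̃₁` (for `d = 3`). -/
def Td3 (d : ℕ) : Fin 2 → Submodule (ZMod d) (V6 d) := fun i =>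
  if i = 0 then
    Submodule.span (ZMod d)
      {(![1, 2, 0], ![1, 2, 0]), (![0, 0, 0], ![1, 1, 1]), (![1, 1, 1], ![0, 0, 0])}
  else
    Submodule.span (ZMod d)
      {(![1, 2, 0], ![2, 1, 0]), (![0, 0, 0], ![1, 1, 1]), (![1, 1, 1], ![0, 0, 0])}

/-- The four stochastic Lagrangian subspaces
`T̃_{ij} = span{(g_i; 0), (0; g_j), (1₃; 1₃)}` (for `d ≡ 1 (mod 3)`),
where `g₀ = (1, ξ, ξ²)` and `g₁ = (1, ξ², ξ)`. -/
def Td1 (d : ℕ) (ξ : ZMod d) : Fin 2 → Fin 2 → Submodule (ZMod d) (V6 d) := fun i j =>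
  Submodule.span (ZMod d)
    {((if i = 0 then ![1, ξ, ξ ^ 2] else ![1, ξ ^ 2, ξ]), (0 : F3 d)),
     ((0 : F3 d), (if j = 0 then ![1, ξ, ξ ^ 2] else ![1, ξ ^ 2, ξ])),
     (one3 d, one3 d)}

namespace StmtAux
open Module Submodule

variable {d : ℕ}

lemma dot3_eq (x y : F3 d) : dot3 x y = x 0 * y 0 + x 1 * y 1 + x 2 * y 2 := by
  simp [dot3, Fin.sum_univ_three]

lemma two_ne (hd : d.Prime) (hodd : Odd d) : (2 : ZMod d) ≠ 0 := by
  intro h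
  have h2 : d ∣ 2 := by
    have := (ZMod.natCast_eq_zero_iff 2 d).1 (by exact_mod_cast h)
    exact this
  have := (Nat.prime_dvd_prime_iff_eq hd Nat.prime_two).1 h2
  subst this
  exact (Nat.not_odd_iff_even.mpr (by decide)) hodd

lemma three_ne (hd : d.Prime) (hmod : d % 3 = 1) : (3 : ZMod d) ≠ 0 := by
  intro h
  have h2 : d ∣ 3 := by
    have := (ZMod.natCast_eq_zero_iff 3 d).1 (by exact_mod_cast h)
    exact this
  have := (Nat.prime_dvd_prime_iff_eq hd Nat.prime_three).1 h2
  omega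

lemma ext3 {x y : F3 d} (h0 : x 0 = y 0) (h1 : x 1 = y 1) (h2 : x 2 = y 2) : x = y := by
  funext i; fin_cases i <;> assumption

lemma polar [Fact d.Prime] {T : Submodule (ZMod d) (V6 d)} (h2 : (2:ZMod d) ≠ 0)
    (hT : ∀ p ∈ T, dot3 p.1 p.1 = dot3 p.2 p.2)
    {p q : V6 d} (hp : p ∈ T) (hq : q ∈ T) : dot3 p.1 q.1 = dot3 p.2 q.2 := by
  have h1 := hT _ (T.add_mem hp hq)
  have hp' := hT _ hp
  have hq' := hT _ hq
  simp only [Prod.fst_add, Prod.snd_add, dot3_eq, Pi.add_apply] at h1 hp' hq' ⊢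
  apply mul_left_cancel₀ h2
  linear_combination h1 - hp' - hq'

lemma classify [Fact d.Prime] (h2 : (2:ZMod d) ≠ 0) (ξ : ZMod d) (hξ : 1 + ξ + ξ^2 = 0)
    (x : F3 d) (h1 : x 0 + x 1 + x 2 = 0) (hx : x 0 * x 0 + x 1 * x 1 + x 2 * x 2 = 0) :
    x = x 0 • ![1, ξ, ξ^2] ∨ x = x 0 • ![1, ξ^2, ξ] := by
  have hfact : (x 1 - ξ * x 0) * (x 1 - ξ^2 * x 0) = 0 := by
    apply mul_left_cancel₀ h2
    rw [mul_zero]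
    linear_combination hx + (x 0 + x 1 - x 2) * h1 + (2*(ξ-1)*(x 0)^2 - 2*(x 0)*(x 1)) * hξ
  rcases mul_eq_zero.mp hfact with h | h
  · left
    refine ext3 ?_ ?_ ?_ <;>
      simp only [Pi.smul_apply, smul_eq_mul, Matrix.cons_val_zero, Matrix.cons_val_one,
        Matrix.head_cons, Matrix.cons_val_two, Matrix.tail_cons]
    · ring
    · linear_combination h
    · linear_combination h1 - h - x 0 * hξ
  · right
    refine ext3 ?_ ?_ ?_ <;>
      simp only [Pi.smul_apply, smul_eq_mul, Matrix.cons_val_zero, Matrix.cons_val_one,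
        Matrix.head_cons, Matrix.cons_val_two, Matrix.tail_cons]
    · ring
    · linear_combination h
    · linear_combination h1 - h - x 0 * hξ

end StmtAux

section SpanLemmas
open Module Submodule
variable {K V : Type*} [Field K] [AddCommGroup V] [Module K V] [FiniteDimensional K V]

lemma range3 (a b c : V) : Set.range ![a, b, c] = {a, b, c} := by
  rw [Matrix.range_cons, Matrix.range_cons, Matrix.range_cons_empty]
  ext v; simp; tauto

lemma exists_notin_span_pair {T : Submodule K V} (hT : finrank K T = 3) (u1 u2 : V) :
    ∃ v ∈ T, v ∉ Submodule.span K {u1, u2} := by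
  by_contra hcon
  push_neg at hcon
  have hle : T ≤ Submodule.span K {u1, u2} := hcon
  have h1 : finrank K T ≤ finrank K (Submodule.span K {u1, u2}) :=
    Submodule.finrank_mono hle
  have h2 : finrank K (Submodule.span K ({u1, u2} : Set V)) ≤ 2 := by
    have : ({u1, u2} : Set V) = Set.range ![u1, u2] := by
      rw [Matrix.range_cons, Matrix.range_cons_empty]; ext v; simp; tauto
    rw [this]
    have h := finrank_range_le_card (R := K) ![u1, u2]
    simpa [Set.finrank, Fintype.card_fin] using h
  omega

lemma span_triple_eq {T : Submodule K V} (hT : finrank K T = 3) {a b c : V}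
    (ha : a ∈ T) (hb : b ∈ T) (hc : c ∈ T)
    (hind : LinearIndependent K ![a, b, c]) :
    Submodule.span K {a, b, c} = T := by
  have hle : Submodule.span K ({a, b, c} : Set V) ≤ T := by
    rw [Submodule.span_le]
    rintro v (rfl | rfl | rfl) <;> assumption
  refine Submodule.eq_of_le_of_finrank_le hle ?_
  rw [hT]
  have := finrank_span_eq_card (R := K) hind
  rw [range3] at this
  simp only [Fintype.card_fin] at this
  omega

end SpanLemmas

namespace StmtAux
open Module Submodule

variable {d : ℕ}

lemma li_A [Fact d.Prime] {u w : F3 d} (hu0 : u 0 = 1) (hu1 : u 1 ≠ 1) (hw0 : w 0 = 1) :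
    LinearIndependent (ZMod d) ![(u, (0 : F3 d)), ((0 : F3 d), w), (one3 d, one3 d)] := by
  rw [Fintype.linearIndependent_iff]
  intro g hg
  rw [Fin.sum_univ_three] at hg
  simp only [Matrix.cons_val_zero, Matrix.cons_val_one, Matrix.head_cons, Matrix.cons_val_two,
    Matrix.tail_cons, Prod.smul_mk, Prod.mk_add_mk, Prod.ext_iff, Prod.mk_eq_zero, Prod.fst_zero, Prod.snd_zero] at hg
  obtain ⟨hf, hs⟩ := hg
  have hf0 := congrFun hf 0
  have hf1 := congrFun hf 1
  have hs0 := congrFun hs 0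
  simp only [Pi.add_apply, Pi.smul_apply, Pi.zero_apply, smul_eq_mul, mul_zero, one3,
    mul_one, hu0, hw0, add_zero, zero_add] at hf0 hf1 hs0
  have hg0 : g 0 = 0 := by
    have : g 0 * (u 1 - 1) = 0 := by linear_combination hf1 - hf0
    rcases mul_eq_zero.mp this with h | h
    · exact h
    · exact absurd (by linear_combination h) hu1
  have hg2 : g 2 = 0 := by linear_combination hf0 - hg0
  have hg1 : g 1 = 0 := by linear_combination hs0 - hg2
  intro i; fin_cases i <;> assumption

lemma li_B [Fact d.Prime] {u w : F3 d} (hu0 : u 0 = 1) (hu2 : u 2 = 0) :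
    LinearIndependent (ZMod d) ![(u, w), ((0 : F3 d), one3 d), (one3 d, (0 : F3 d))] := by
  rw [Fintype.linearIndependent_iff]
  intro g hg
  rw [Fin.sum_univ_three] at hg
  simp only [Matrix.cons_val_zero, Matrix.cons_val_one, Matrix.head_cons, Matrix.cons_val_two,
    Matrix.tail_cons, Prod.smul_mk, Prod.mk_add_mk, Prod.ext_iff, Prod.mk_eq_zero, Prod.fst_zero, Prod.snd_zero] at hg
  obtain ⟨hf, hs⟩ := hg
  have hf0 := congrFun hf 0
  have hf2 := congrFun hf 2
  have hs0 := congrFun hs 0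
  simp only [Pi.add_apply, Pi.smul_apply, Pi.zero_apply, smul_eq_mul, mul_zero, one3,
    mul_one, hu0, hu2, add_zero, zero_add] at hf0 hf2 hs0
  have hg2 : g 2 = 0 := hf2
  have hg0 : g 0 = 0 := by linear_combination hf0 - hg2
  have hg1 : g 1 = 0 := by linear_combination hs0 - (w 0) * hg0
  intro i; fin_cases i <;> assumption

end StmtAux

namespace StmtAux
open Module Submodule
variable {d : ℕ}

def gv (ξ : ZMod d) : Fin 2 → F3 d := fun i => if i = 0 then ![1, ξ, ξ ^ 2] else ![1, ξ ^ 2, ξ]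

lemma gv_zero (ξ : ZMod d) : gv ξ 0 = ![1, ξ, ξ ^ 2] := rfl
lemma gv_one (ξ : ZMod d) : gv ξ 1 = ![1, ξ ^ 2, ξ] := rfl

lemma gv_c0 (ξ : ZMod d) (i : Fin 2) : gv ξ i 0 = 1 := by
  fin_cases i <;> rfl

lemma xi_facts (hd : d.Prime) (ξ : ZMod d) (hord : orderOf ξ = 3) :
    ξ ≠ 1 ∧ ξ ^ 2 ≠ 1 ∧ 1 + ξ + ξ ^ 2 = 0 ∧ ξ ^ 3 = 1 := by
  haveI : Fact d.Prime := ⟨hd⟩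
  have hcube : ξ ^ 3 = 1 := by rw [← hord]; exact pow_orderOf_eq_one ξ
  have hne1 : ξ ≠ 1 := by
    intro h; rw [h] at hord; simp [orderOf_one] at hord
  have hsum : 1 + ξ + ξ ^ 2 = 0 := by
    have hmul : (ξ - 1) * (1 + ξ + ξ ^ 2) = 0 := by linear_combination hcube
    rcases mul_eq_zero.mp hmul with h | h
    · exact absurd (by linear_combination h) hne1
    · exact h
  have hne2 : ξ ^ 2 ≠ 1 := by
    intro h; exact hne1 (by linear_combination hcube - ξ * h)
  exact ⟨hne1, hne2, hsum, hcube⟩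

lemma classify' [Fact d.Prime] (h2 : (2 : ZMod d) ≠ 0) (ξ : ZMod d) (hsum : 1 + ξ + ξ ^ 2 = 0)
    (x : F3 d) (h1 : x 0 + x 1 + x 2 = 0) (hx : x 0 * x 0 + x 1 * x 1 + x 2 * x 2 = 0) :
    ∃ i : Fin 2, x = x 0 • gv ξ i := by
  rcases classify h2 ξ hsum x h1 hx with h | h
  exacts [⟨0, h⟩, ⟨1, h⟩]

lemma key_id (ξ : ZMod d) (hsum : 1 + ξ + ξ ^ 2 = 0) (i : Fin 2) (a : F3 d)
    (hA : a 0 * gv ξ i 0 + a 1 * gv ξ i 1 + a 2 * gv ξ i 2 = 0) :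
    3 * (a 0 ^ 2 + a 1 ^ 2 + a 2 ^ 2) = (a 0 + a 1 + a 2) ^ 2 := by
  fin_cases i <;>
    simp only [Fin.mk_zero, Fin.mk_one, gv_zero, gv_one, Matrix.cons_val_zero,
      Matrix.cons_val_one, Matrix.head_cons, Matrix.cons_val_two, Matrix.tail_cons,
      mul_one] at hA
  · linear_combination (2 * (a 0 + ξ ^ 2 * a 1 + ξ * a 2)) * hA +
      (-2 * (ξ - 1) * (a 1 ^ 2 + a 2 ^ 2) - 2 * (a 0 * a 1 + a 0 * a 2)
        - 2 * (ξ ^ 2 - ξ + 1) * (a 1 * a 2)) * hsum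
  · linear_combination (2 * (a 0 + ξ * a 1 + ξ ^ 2 * a 2)) * hA +
      (-2 * (ξ - 1) * (a 1 ^ 2 + a 2 ^ 2) - 2 * (a 0 * a 1 + a 0 * a 2)
        - 2 * (ξ ^ 2 - ξ + 1) * (a 1 * a 2)) * hsum

end StmtAux

namespace StmtAux
open Module Submodule
variable {d : ℕ}

lemma Td1_eq (ξ : ZMod d) (i j : Fin 2) :
    Td1 d ξ i j = Submodule.span (ZMod d) {((gv ξ i, (0 : F3 d)) : V6 d),
      ((0 : F3 d), gv ξ j), (one3 d, one3 d)} := rfl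

lemma gv_sum (ξ : ZMod d) (hsum : 1 + ξ + ξ ^ 2 = 0) (i : Fin 2) :
    gv ξ i 0 + gv ξ i 1 + gv ξ i 2 = 0 := by
  fin_cases i <;>
    simp only [Fin.mk_zero, Fin.mk_one, gv_zero, gv_one, Matrix.cons_val_zero,
      Matrix.cons_val_one, Matrix.head_cons, Matrix.cons_val_two, Matrix.tail_cons] <;>
    linear_combination hsum

lemma gv_c1_ne (ξ : ZMod d) (hne1 : ξ ≠ 1) (hne2 : ξ ^ 2 ≠ 1) (i : Fin 2) :
    gv ξ i 1 ≠ 1 := by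
  fin_cases i <;>
    simp only [Fin.mk_zero, Fin.mk_one, gv_zero, gv_one, Matrix.cons_val_one, Matrix.head_cons]
  · exact hne1
  · exact hne2

lemma gv_cross (ξ : ZMod d) (hcube : ξ ^ 3 = 1) {i i' : Fin 2} (hne : i' ≠ i) :
    gv ξ i' 0 * gv ξ i 0 + gv ξ i' 1 * gv ξ i 1 + gv ξ i' 2 * gv ξ i 2 = 3 := by
  fin_cases i <;> fin_cases i' <;>
      simp only [Fin.mk_zero, Fin.mk_one, gv_zero, gv_one, Matrix.cons_val_zero,
        Matrix.cons_val_one, Matrix.head_cons, Matrix.cons_val_two, Matrix.tail_cons] <;>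
    first
      | exact absurd rfl hne
      | linear_combination (ξ ^ 3 + 1) * hcube
      | linear_combination 2 * hcube

lemma main1 (hd : d.Prime) (hodd : Odd d) (hmod : d % 3 = 1) (ξ : ZMod d)
    (hord : orderOf ξ = 3) {T : Submodule (ZMod d) (V6 d)} (hT : IsSLS T)
    {x : F3 d} (hx0 : x ≠ 0) (hxT : (x, (0 : F3 d)) ∈ T) :
    ∃ i j : Fin 2, T = Td1 d ξ i j := by
  haveI : Fact d.Prime := ⟨hd⟩
  obtain ⟨hne1, hne2, hsum, hcube⟩ := xi_facts hd ξ hord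
  have h2 := two_ne hd hodd
  have h3 := three_ne hd hmod
  obtain ⟨hTq, hTr, hTone⟩ := hT
  -- basic facts about x
  have hq : x 0 * x 0 + x 1 * x 1 + x 2 * x 2 = 0 := by
    have := hTq _ hxT
    simpa [dot3_eq] using this
  have ho : x 0 + x 1 + x 2 = 0 := by
    have := polar h2 hTq hxT hTone
    simpa [dot3_eq, one3] using this
  obtain ⟨i, hxi⟩ := classify' h2 ξ hsum x ho hq
  set c0 : ZMod d := x 0 with hc0
  have hx00 : c0 ≠ 0 := fun h => hx0 (by rw [hxi, h, zero_smul])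
  have hu1 : ((gv ξ i, (0 : F3 d)) : V6 d) ∈ T := by
    have hm := T.smul_mem c0⁻¹ hxT
    have he : c0⁻¹ • ((x, (0 : F3 d)) : V6 d) = (gv ξ i, (0 : F3 d)) := by
      rw [hxi, Prod.smul_mk, smul_smul, inv_mul_cancel₀ hx00, one_smul, smul_zero]
    rwa [he] at hm
  -- pick v outside span of the two known elements
  obtain ⟨v, hvT, hvout⟩ := exists_notin_span_pair hTr ((gv ξ i, (0 : F3 d)) : V6 d)
    (one3 d, one3 d)
  obtain ⟨a, b⟩ := v
  have hA : a 0 * gv ξ i 0 + a 1 * gv ξ i 1 + a 2 * gv ξ i 2 = 0 := by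
    have := polar h2 hTq hvT hu1
    simpa [dot3_eq] using this
  have hB : a 0 + a 1 + a 2 = b 0 + b 1 + b 2 := by
    have := polar h2 hTq hvT hTone
    simpa [dot3_eq, one3] using this
  have hC : a 0 * a 0 + a 1 * a 1 + a 2 * a 2 = b 0 * b 0 + b 1 * b 1 + b 2 * b 2 := by
    simpa [dot3_eq] using hTq _ hvT
  have key : 3 * (a 0 ^ 2 + a 1 ^ 2 + a 2 ^ 2) = (a 0 + a 1 + a 2) ^ 2 :=
    key_id ξ hsum i a hA
  set s : ZMod d := a 0 + a 1 + a 2 with hs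
  set t : ZMod d := (3 : ZMod d)⁻¹ * s with htdef
  have h3t : (3 : ZMod d) * t = s := by
    rw [htdef, ← mul_assoc, mul_inv_cancel₀ h3, one_mul]
  set a' : F3 d := fun k => a k - t with ha'def
  set b' : F3 d := fun k => b k - t with hb'def
  have ha'1 : a' 0 + a' 1 + a' 2 = 0 := by
    simp only [ha'def]; linear_combination hs.symm - h3t
  have hb'1 : b' 0 + b' 1 + b' 2 = 0 := by
    simp only [hb'def]; linear_combination - hB - h3t
  have ha'q : a' 0 * a' 0 + a' 1 * a' 1 + a' 2 * a' 2 = 0 := by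
    have h30 : (3 : ZMod d) * (a' 0 * a' 0 + a' 1 * a' 1 + a' 2 * a' 2) = 0 := by
      simp only [ha'def]
      linear_combination key + (3 * t - s) * h3t
    exact (mul_eq_zero.mp h30).resolve_left h3
  have hb'q : b' 0 * b' 0 + b' 1 * b' 1 + b' 2 * b' 2 = 0 := by
    have h30 : (3 : ZMod d) * (b' 0 * b' 0 + b' 1 * b' 1 + b' 2 * b' 2) = 0 := by
      simp only [hb'def]
      linear_combination key - 3 * hC + 6 * t * hB + (3 * t - s) * h3t
    exact (mul_eq_zero.mp h30).resolve_left h3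
  obtain ⟨i', ha'⟩ := classify' h2 ξ hsum a' ha'1 ha'q
  obtain ⟨j, hb'⟩ := classify' h2 ξ hsum b' hb'1 hb'q
  -- a' is a multiple of gv ξ i
  obtain ⟨c, ha2⟩ : ∃ c : ZMod d, a' = c • gv ξ i := by
    by_cases hii : i' = i
    · exact ⟨a' 0, by rw [← hii]; exact ha'⟩
    · have hdz : a' 0 * gv ξ i 0 + a' 1 * gv ξ i 1 + a' 2 * gv ξ i 2 = 0 := by
        simp only [ha'def]
        linear_combination hA - t * gv_sum ξ hsum i
      have e0 := congrFun ha' 0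
      have e1 := congrFun ha' 1
      have e2 := congrFun ha' 2
      simp only [Pi.smul_apply, smul_eq_mul] at e0 e1 e2
      rw [e0, e1, e2] at hdz
      have h3z : a' 0 * (3 : ZMod d) = 0 := by
        rw [← gv_cross ξ hcube hii]; linear_combination hdz
      have ha'0 : a' 0 = 0 := (mul_eq_zero.mp h3z).resolve_right h3
      refine ⟨0, ?_⟩
      rw [zero_smul]
      funext k
      have := congrFun ha' k
      rw [ha'0, zero_smul] at this
      exact this
  -- b' 0 ≠ 0
  have hb0 : b' 0 ≠ 0 := by
    intro hz
    apply hvout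
    rw [Submodule.mem_span_pair]
    refine ⟨c, t, ?_⟩
    have hb'z : b' = 0 := by rw [hb', hz, zero_smul]
    refine Prod.ext ?_ ?_ <;> funext k
    · have := congrFun ha2 k
      simp only [ha'def, Pi.smul_apply, smul_eq_mul] at this
      simp only [Prod.fst_add, Prod.smul_mk, Pi.add_apply, Pi.smul_apply, smul_eq_mul, one3]
      linear_combination -this
    · have := congrFun hb'z k
      simp only [hb'def, Pi.zero_apply] at this
      simp only [Prod.snd_add, Prod.smul_mk, Pi.add_apply, Pi.smul_apply, smul_eq_mul,
        smul_zero, Pi.zero_apply, one3, mul_one, zero_add]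
      linear_combination -this
  -- (0, gv ξ j) ∈ T
  have hu2 : (((0 : F3 d), gv ξ j) : V6 d) ∈ T := by
    have hm : ((a, b) : V6 d) - c • (gv ξ i, (0 : F3 d)) - t • (one3 d, one3 d) ∈ T :=
      T.sub_mem (T.sub_mem hvT (T.smul_mem c hu1)) (T.smul_mem t hTone)
    have hid : ((a, b) : V6 d) - c • (gv ξ i, (0 : F3 d)) - t • (one3 d, one3 d)
        = (b' 0) • ((0 : F3 d), gv ξ j) := by
      refine Prod.ext ?_ ?_ <;> funext k
      · have := congrFun ha2 k
        simp only [ha'def, Pi.smul_apply, smul_eq_mul] at this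
        simp only [Prod.fst_sub, Prod.smul_mk, Pi.sub_apply, Pi.smul_apply, smul_eq_mul,
          one3, mul_one, smul_zero, Pi.zero_apply, mul_zero]
        linear_combination this
      · have := congrFun hb' k
        simp only [hb'def, Pi.smul_apply, smul_eq_mul] at this
        simp only [Prod.snd_sub, Prod.smul_mk, Pi.sub_apply, Pi.smul_apply, smul_eq_mul,
          one3, mul_one, smul_zero, Pi.zero_apply, mul_zero, sub_zero]
        linear_combination this
    rw [hid] at hm
    have := T.smul_mem (b' 0)⁻¹ hm
    rwa [smul_smul, inv_mul_cancel₀ hb0, one_smul] at this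
  refine ⟨i, j, ?_⟩
  rw [Td1_eq]
  exact (span_triple_eq hTr hu1 hu2 hTone
    (li_A (gv_c0 ξ i) (gv_c1_ne ξ hne1 hne2 i) (gv_c0 ξ j))).symm

end StmtAux

namespace StmtAux
open Module Submodule

lemma zvec : (![0, 0, 0] : F3 3) = 0 := by decide
lemma ovec : (![1, 1, 1] : F3 3) = one3 3 := by decide

lemma Td3_zero : Td3 3 0 = Submodule.span (ZMod 3)
    {((![1, 2, 0], ![1, 2, 0]) : V6 3), ((0 : F3 3), one3 3), (one3 3, (0 : F3 3))} := by
  show Submodule.span _ _ = _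
  rw [zvec, ovec]

lemma Td3_one : Td3 3 1 = Submodule.span (ZMod 3)
    {((![1, 2, 0], ![2, 1, 0]) : V6 3), ((0 : F3 3), one3 3), (one3 3, (0 : F3 3))} := by
  show Submodule.span _ _ = _
  rw [zvec, ovec]

lemma two_ne3 : (2 : ZMod 3) ≠ 0 := by decide
lemma three_z3 : (3 : ZMod 3) = 0 := by decide
lemma sum13 : (1 : ZMod 3) + 1 + 1 ^ 2 = 0 := by decide
lemma vone_a : (![1, 1, 1 ^ 2] : F3 3) = one3 3 := by decide
lemma vone_b : (![1, 1 ^ 2, 1] : F3 3) = one3 3 := by decide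
lemma w03 : (![1, 2, 0] : F3 3) 0 = 1 := rfl
lemma w23 : (![1, 2, 0] : F3 3) 2 = 0 := rfl

lemma main3 {T : Submodule (ZMod 3) (V6 3)} (hT : IsSLS T)
    {x : F3 3} (hx0 : x ≠ 0) (hxT : (x, (0 : F3 3)) ∈ T) :
    ∃ i : Fin 2, T = Td3 3 i := by
  haveI : Fact (Nat.Prime 3) := ⟨by norm_num⟩
  have h2 := two_ne3
  have h3z := three_z3
  obtain ⟨hTq, hTr, hTone⟩ := hT
  have hq : x 0 * x 0 + x 1 * x 1 + x 2 * x 2 = 0 := by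
    simpa [dot3_eq] using hTq _ hxT
  have ho : x 0 + x 1 + x 2 = 0 := by
    have := polar h2 hTq hxT hTone
    simpa [dot3_eq, one3] using this
  have hxi : x = x 0 • one3 3 := by
    rcases classify h2 1 sum13 x ho hq with h | h
    · rw [vone_a] at h; exact h
    · rw [vone_b] at h; exact h
  set c0 : ZMod 3 := x 0 with hc0
  have hx00 : c0 ≠ 0 := fun h => hx0 (by rw [hxi, h, zero_smul])
  have hu1 : ((one3 3, (0 : F3 3)) : V6 3) ∈ T := by
    have hm := T.smul_mem c0⁻¹ hxT
    have he : c0⁻¹ • ((x, (0 : F3 3)) : V6 3) = (one3 3, (0 : F3 3)) := by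
      rw [hxi, Prod.smul_mk, smul_smul, inv_mul_cancel₀ hx00, one_smul, smul_zero]
    rwa [he] at hm
  have hu3 : (((0 : F3 3), one3 3) : V6 3) ∈ T := by
    have hm := T.sub_mem hTone hu1
    have he : ((one3 3, one3 3) : V6 3) - (one3 3, (0 : F3 3)) = ((0 : F3 3), one3 3) := by
      refine Prod.ext ?_ ?_ <;> simp
    rwa [he] at hm
  obtain ⟨v, hvT, hvout⟩ := exists_notin_span_pair hTr ((one3 3, (0 : F3 3)) : V6 3)
    (((0 : F3 3), one3 3) : V6 3)
  obtain ⟨a, b⟩ := v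
  have hA : a 0 + a 1 + a 2 = 0 := by
    have := polar h2 hTq hvT hu1
    simpa [dot3_eq, one3] using this
  have hB : b 0 + b 1 + b 2 = 0 := by
    have := polar h2 hTq hvT hu3
    simpa [dot3_eq, one3] using this.symm
  have hC : a 0 * a 0 + a 1 * a 1 + a 2 * a 2 = b 0 * b 0 + b 1 * b 1 + b 2 * b 2 := by
    simpa [dot3_eq] using hTq _ hvT
  have hdiff : ((b 0 - b 2) - (a 0 - a 2)) * ((b 0 - b 2) + (a 0 - a 2)) = 0 := by
    linear_combination (-2 : ZMod 3) * hC - 2 * (b 1 - b 0 - b 2) * hB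
      + 2 * (a 1 - a 0 - a 2) * hA
      + (-4 * (b 0 * b 2 - a 0 * a 2) - (b 0 - b 2) ^ 2 + (a 0 - a 2) ^ 2) * h3z
  have hsne : a 0 - a 2 ≠ 0 := by
    intro hs0
    have hs'0 : b 0 - b 2 = 0 := by
      rcases mul_eq_zero.mp hdiff with h | h
      · linear_combination h + hs0
      · linear_combination h - hs0
    apply hvout
    rw [Submodule.mem_span_pair]
    refine ⟨a 2, b 2, Prod.ext (ext3 ?_ ?_ ?_) (ext3 ?_ ?_ ?_)⟩
    · simp only [Prod.fst_add, Prod.smul_mk, Pi.add_apply, Pi.smul_apply, smul_eq_mul,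
        one3, mul_one, smul_zero, Pi.zero_apply, add_zero]
      linear_combination -hs0
    · simp only [Prod.fst_add, Prod.smul_mk, Pi.add_apply, Pi.smul_apply, smul_eq_mul,
        one3, mul_one, smul_zero, Pi.zero_apply, add_zero]
      linear_combination -hA + hs0 + a 2 * h3z
    · simp only [Prod.fst_add, Prod.smul_mk, Pi.add_apply, Pi.smul_apply, smul_eq_mul,
        one3, mul_one, smul_zero, Pi.zero_apply, add_zero]
      try ring
    · simp only [Prod.snd_add, Prod.smul_mk, Pi.add_apply, Pi.smul_apply, smul_eq_mul,
        one3, mul_one, smul_zero, Pi.zero_apply, zero_add]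
      linear_combination -hs'0
    · simp only [Prod.snd_add, Prod.smul_mk, Pi.add_apply, Pi.smul_apply, smul_eq_mul,
        one3, mul_one, smul_zero, Pi.zero_apply, zero_add]
      linear_combination -hB + hs'0 + b 2 * h3z
    · simp only [Prod.snd_add, Prod.smul_mk, Pi.add_apply, Pi.smul_apply, smul_eq_mul,
        one3, mul_one, smul_zero, Pi.zero_apply, zero_add]
      try ring
  have hm : ((a, b) : V6 3) - a 2 • (one3 3, (0 : F3 3)) - b 2 • ((0 : F3 3), one3 3) ∈ T :=
    T.sub_mem (T.sub_mem hvT (T.smul_mem (a 2) hu1)) (T.smul_mem (b 2) hu3)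
  rcases mul_eq_zero.mp hdiff with hε | hε
  · -- b 0 - b 2 = a 0 - a 2, use Td3 3 0
    refine ⟨0, ?_⟩
    have hid : ((a, b) : V6 3) - a 2 • (one3 3, (0 : F3 3)) - b 2 • ((0 : F3 3), one3 3)
        = (a 0 - a 2) • ((![1, 2, 0], ![1, 2, 0]) : V6 3) := by
      refine Prod.ext (ext3 ?_ ?_ ?_) (ext3 ?_ ?_ ?_) <;>
        simp only [Prod.fst_sub, Prod.snd_sub, Prod.smul_mk, Pi.sub_apply, Pi.smul_apply,
          smul_eq_mul, one3, mul_one, smul_zero, Pi.zero_apply, mul_zero, sub_zero,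
          Matrix.cons_val_zero, Matrix.cons_val_one, Matrix.head_cons, Matrix.cons_val_two,
          Matrix.tail_cons, sub_self]
      · linear_combination hA - a 0 * h3z
      · linear_combination hε
      · linear_combination hB - b 0 * h3z + 2 * hε
    rw [hid] at hm
    have hw : ((![1, 2, 0], ![1, 2, 0]) : V6 3) ∈ T := by
      have := T.smul_mem (a 0 - a 2)⁻¹ hm
      rwa [smul_smul, inv_mul_cancel₀ hsne, one_smul] at this
    rw [Td3_zero]
    exact (span_triple_eq hTr hw hu3 hu1 (li_B w03 w23)).symm
  · -- b 0 - b 2 = -(a 0 - a 2), use Td3 3 1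
    refine ⟨1, ?_⟩
    have hid : ((a, b) : V6 3) - a 2 • (one3 3, (0 : F3 3)) - b 2 • ((0 : F3 3), one3 3)
        = (a 0 - a 2) • ((![1, 2, 0], ![2, 1, 0]) : V6 3) := by
      refine Prod.ext (ext3 ?_ ?_ ?_) (ext3 ?_ ?_ ?_) <;>
        simp only [Prod.fst_sub, Prod.snd_sub, Prod.smul_mk, Pi.sub_apply, Pi.smul_apply,
          smul_eq_mul, one3, mul_one, smul_zero, Pi.zero_apply, mul_zero, sub_zero,
          Matrix.cons_val_zero, Matrix.cons_val_one, Matrix.head_cons, Matrix.cons_val_two,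
          Matrix.tail_cons, sub_self]
      · linear_combination hA - a 0 * h3z
      · linear_combination hε - (a 0 - a 2) * h3z
      · linear_combination hB - b 2 * h3z - hε
    rw [hid] at hm
    have hw : ((![1, 2, 0], ![2, 1, 0]) : V6 3) ∈ T := by
      have := T.smul_mem (a 0 - a 2)⁻¹ hm
      rwa [smul_smul, inv_mul_cancel₀ hsne, one_smul] at this
    rw [Td3_one]
    exact (span_triple_eq hTr hw hu3 hu1 (li_B w03 w23)).symm

end StmtAux

namespace StmtAux
open Module Submodule
variable {d : ℕ}

def phi (w1 w2 : F3 d) : V6 d →ₗ[ZMod d] ZMod d where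
  toFun p := dot3 p.1 w1 + dot3 p.2 w2
  map_add' p q := by
    simp only [Prod.fst_add, Prod.snd_add, dot3_eq, Pi.add_apply]; ring
  map_smul' c p := by
    simp only [Prod.smul_fst, Prod.smul_snd, dot3_eq, Pi.smul_apply, smul_eq_mul,
      RingHom.id_apply]; ring

lemma phi_apply (w1 w2 : F3 d) (p : V6 d) :
    phi w1 w2 p = dot3 p.1 w1 + dot3 p.2 w2 := rfl

lemma dot3_zr (x : F3 d) : dot3 x 0 = 0 := by simp [dot3_eq]
lemma dot3_zl (x : F3 d) : dot3 0 x = 0 := by simp [dot3_eq]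

lemma Td3_ne : Td3 3 0 ≠ Td3 3 1 := by
  intro h
  have hm : ((![1, 2, 0], ![1, 2, 0]) : V6 3) ∈ Td3 3 0 := by
    rw [Td3_zero]
    exact Submodule.subset_span (Set.mem_insert _ _)
  rw [h, Td3_one] at hm
  have hker : Submodule.span (ZMod 3) {((![1, 2, 0], ![2, 1, 0]) : V6 3),
      ((0 : F3 3), one3 3), (one3 3, (0 : F3 3))} ≤
      LinearMap.ker (phi ![1, 2, 0] ![1, 2, 0]) := by
    rw [Submodule.span_le]
    rintro v (rfl | rfl | rfl) <;>
      · rw [SetLike.mem_coe, LinearMap.mem_ker, phi_apply]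
        decide
  have := hker hm
  rw [LinearMap.mem_ker, phi_apply] at this
  exact absurd this (by decide)

lemma dot_gv_gv0 (ξ : ZMod d) (hsum : 1 + ξ + ξ ^ 2 = 0) (hcube : ξ ^ 3 = 1) :
    dot3 (gv ξ 0) (gv ξ 0) = 0 ∧ dot3 (gv ξ 1) (gv ξ 0) = 3 ∧ dot3 (one3 d) (gv ξ 0) = 0 := by
  refine ⟨?_, ?_, ?_⟩ <;>
    simp only [dot3_eq, gv_zero, gv_one, one3, Matrix.cons_val_zero, Matrix.cons_val_one,
      Matrix.head_cons, Matrix.cons_val_two, Matrix.tail_cons, one_mul, mul_one]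
  · linear_combination hsum + ξ * hcube
  · linear_combination 2 * hcube
  · linear_combination hsum

lemma Td1_ne_fst (hd : d.Prime) (hmod : d % 3 = 1) (ξ : ZMod d) (hord : orderOf ξ = 3)
    (j l : Fin 2) : Td1 d ξ 0 j ≠ Td1 d ξ 1 l := by
  haveI : Fact d.Prime := ⟨hd⟩
  obtain ⟨hne1, hne2, hsum, hcube⟩ := xi_facts hd ξ hord
  obtain ⟨e1, e2, e3⟩ := dot_gv_gv0 ξ hsum hcube
  have h3 := three_ne hd hmod
  intro h
  have hm : ((gv ξ 1, (0 : F3 d)) : V6 d) ∈ Td1 d ξ 1 l := by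
    rw [Td1_eq]
    exact Submodule.subset_span (Set.mem_insert _ _)
  rw [← h, Td1_eq] at hm
  have hker : Submodule.span (ZMod d) {((gv ξ 0, (0 : F3 d)) : V6 d),
      ((0 : F3 d), gv ξ j), (one3 d, one3 d)} ≤
      LinearMap.ker (phi (gv ξ 0) 0) := by
    rw [Submodule.span_le]
    rintro v (rfl | rfl | rfl) <;>
        rw [SetLike.mem_coe, LinearMap.mem_ker, phi_apply]
    · simp [e1, dot3_zr]
    · simp [dot3_zl, dot3_zr]
    · simp [e3, dot3_zr]
  have := hker hm
  rw [LinearMap.mem_ker, phi_apply] at this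
  simp only [e2, dot3_zr, add_zero] at this
  exact h3 this

lemma Td1_ne_snd (hd : d.Prime) (hmod : d % 3 = 1) (ξ : ZMod d) (hord : orderOf ξ = 3)
    (i k : Fin 2) : Td1 d ξ i 0 ≠ Td1 d ξ k 1 := by
  haveI : Fact d.Prime := ⟨hd⟩
  obtain ⟨hne1, hne2, hsum, hcube⟩ := xi_facts hd ξ hord
  obtain ⟨e1, e2, e3⟩ := dot_gv_gv0 ξ hsum hcube
  have h3 := three_ne hd hmod
  intro h
  have hm : (((0 : F3 d), gv ξ 1) : V6 d) ∈ Td1 d ξ k 1 := by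
    rw [Td1_eq]
    exact Submodule.subset_span (Set.mem_insert_of_mem _ (Set.mem_insert _ _))
  rw [← h, Td1_eq] at hm
  have hker : Submodule.span (ZMod d) {((gv ξ i, (0 : F3 d)) : V6 d),
      ((0 : F3 d), gv ξ 0), (one3 d, one3 d)} ≤
      LinearMap.ker (phi 0 (gv ξ 0)) := by
    rw [Submodule.span_le]
    rintro v (rfl | rfl | rfl) <;>
        rw [SetLike.mem_coe, LinearMap.mem_ker, phi_apply]
    · simp [dot3_zl, dot3_zr]
    · simp [e1, dot3_zl]
    · simp [e3, dot3_zr]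
  have := hker hm
  rw [LinearMap.mem_ker, phi_apply] at this
  simp only [e2, dot3_zl, zero_add] at this
  exact h3 this

end StmtAux

noncomputable section TestFinal
open StmtAux

lemma mem_Td3 (i : Fin 2) : ((one3 3, (0 : F3 3)) : V6 3) ∈ Td3 3 i := by
  fin_cases i <;> simp only [Fin.mk_zero, Fin.mk_one]
  · rw [Td3_zero]
    exact Submodule.subset_span (Set.mem_insert_of_mem _ (Set.mem_insert_of_mem _ rfl))
  · rw [Td3_one]
    exact Submodule.subset_span (Set.mem_insert_of_mem _ (Set.mem_insert_of_mem _ rfl))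


open StmtAux

theorem stmt7 (d : ℕ) (hd : d.Prime) (hodd : Odd d) :
    (d = 3 →
      Td3 d 0 ≠ Td3 d 1 ∧
      ∀ T : Submodule (ZMod d) (V6 d), IsSLS T →
        ((∃ x : F3 d, x ≠ 0 ∧ (x, (0 : F3 d)) ∈ T) ↔ ∃ i : Fin 2, T = Td3 d i)) ∧
    (d % 3 = 1 → ∀ ξ : ZMod d, orderOf ξ = 3 →
      (∀ i j k l : Fin 2, Td1 d ξ i j = Td1 d ξ k l → i = k ∧ j = l) ∧
      ∀ T : Submodule (ZMod d) (V6 d), IsSLS T →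
        ((∃ x : F3 d, x ≠ 0 ∧ (x, (0 : F3 d)) ∈ T) ↔ ∃ i j : Fin 2, T = Td1 d ξ i j)) := by
  constructor
  · rintro rfl
    refine ⟨Td3_ne, ?_⟩
    intro T hT
    constructor
    · rintro ⟨x, hx0, hxT⟩
      exact main3 hT hx0 hxT
    · rintro ⟨i, rfl⟩
      refine ⟨one3 3, ?_, mem_Td3 i⟩
      intro h
      have h0 := congrFun h 0
      exact one_ne_zero (α := ZMod 3) (by simpa [one3] using h0)
  · intro hmod ξ hord
    haveI : Fact d.Prime := ⟨hd⟩
    constructor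
    · intro i j k l h
      constructor
      · fin_cases i <;> fin_cases k
        · rfl
        · exact absurd h (Td1_ne_fst hd hmod ξ hord j l)
        · exact absurd h.symm (Td1_ne_fst hd hmod ξ hord l j)
        · rfl
      · fin_cases j <;> fin_cases l
        · rfl
        · exact absurd h (Td1_ne_snd hd hmod ξ hord i k)
        · exact absurd h.symm (Td1_ne_snd hd hmod ξ hord k i)
        · rfl
    · intro T hT
      constructor
      · rintro ⟨x, hx0, hxT⟩
        exact main1 hd hodd hmod ξ hord hT hx0 hxT
      · rintro ⟨i, j, rfl⟩
        refine ⟨gv ξ i, ?_, ?_⟩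
        · intro hz
          have h0 := congrFun hz 0
          rw [gv_c0] at h0
          exact one_ne_zero (α := ZMod d) (by simpa using h0)
        · rw [Td1_eq]
          exact Submodule.subset_span (Set.mem_insert _ _)
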